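/- Let n be a positive integer, let k be a natural number, and let p be a real polynomial of degree at most n with |p(x)| ≤ 1 for all x ∈ [−1, 1]. Then p^{(k)}(1) ≤ T_n^{(k)}(1), where T_n is the n-th Chebyshev polynomial of the first kind and the superscript (k) denotes the k-th derivative. -/

import Mathlib

open Polynomial Real Finset

private lemma aux_iter_sum (k : ℕ) (S : Multiset (Polynomial ℝ)) :
    Polynomial.derivative^[k] S.sum = (S.map (fun q => Polynomial.derivative^[k] q)).sum := by
  rw [← Module.End.pow_apply, map_multiset_sum]
  congr 1
  exact Multiset.map_congr rfl fun q _ => Module.End.pow_apply _ _ _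

private lemma aux_eval_sum (x : ℝ) (S : Multiset (Polynomial ℝ)) :
    (S.sum).eval x = (S.map (fun q => q.eval x)).sum :=
  map_multiset_sum (Polynomial.evalRingHom x) S

private lemma aux_nonneg (k : ℕ) : ∀ (m : Multiset ℝ), (∀ r ∈ m, r ≤ 1) →
    0 ≤ (Polynomial.derivative^[k] ((m.map fun r => X - C r).prod)).eval 1 := by
  induction k with
  | zero =>
    intro m hm
    simp only [Function.iterate_zero, id_eq]
    rw [eval_multiset_prod, Multiset.map_map]
    apply Multiset.prod_nonneg
    intro x hx
    obtain ⟨r, hr, rfl⟩ := Multiset.mem_map.mp hx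
    simp only [Function.comp_apply, eval_sub, eval_X, eval_C]
    linarith [hm r hr]
  | succ k ih =>
    intro m hm
    rw [Function.iterate_succ_apply]
    rw [derivative_prod (s := m) (f := fun r => X - C r)]
    have hmap : (m.map fun i =>
        ((m.erase i).map fun r => X - C r).prod * derivative (X - C i))
        = m.map fun i => ((m.erase i).map fun r => X - C r).prod := by
      refine Multiset.map_congr rfl fun i hi => ?_
      simp
    rw [hmap, aux_iter_sum, aux_eval_sum, Multiset.map_map, Multiset.map_map]
    apply Multiset.sum_nonneg
    intro x hx
    obtain ⟨i, hi, rfl⟩ := Multiset.mem_map.mp hx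
    exact ih (m.erase i) fun r hr => hm r (Multiset.mem_of_mem_erase hr)

private lemma aux_T_deg : ∀ n : ℕ, (Polynomial.Chebyshev.T ℝ n).natDegree ≤ n
  | 0 => by simp [Polynomial.Chebyshev.T_zero]
  | 1 => by simpa [Polynomial.Chebyshev.T_one] using Polynomial.natDegree_X_le
  | (n+2) => by
    have h1 : (Polynomial.Chebyshev.T ℝ ((n:ℤ)+1)).natDegree ≤ n + 1 := by
      rw [show ((n:ℤ)+1) = ((n+1 : ℕ) : ℤ) by push_cast; ring]
      exact aux_T_deg (n+1)
    have h0 : (Polynomial.Chebyshev.T ℝ (n:ℤ)).natDegree ≤ n := aux_T_deg n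
    rw [show (((n+2:ℕ)) : ℤ) = (n:ℤ) + 2 by push_cast; ring,
      Polynomial.Chebyshev.T_add_two]
    refine le_trans (Polynomial.natDegree_sub_le _ _) (max_le ?_ (by omega))
    refine le_trans (Polynomial.natDegree_mul_le) ?_
    have h2 : (2 * (X : Polynomial ℝ)).natDegree ≤ 1 :=
      le_trans Polynomial.natDegree_mul_le (by simp)
    omega

theorem stmt17 (n : ℕ) (hn : 1 ≤ n) (k : ℕ) (p : Polynomial ℝ)
    (hdeg : p.natDegree ≤ n)
    (hbound : ∀ x ∈ Set.Icc (-1 : ℝ) 1, |p.eval x| ≤ 1) :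
    (Polynomial.derivative^[k] p).eval 1 ≤
      (Polynomial.derivative^[k] (Polynomial.Chebyshev.T ℝ n)).eval 1 := by
  classical
  have hnpos : (0:ℝ) < n := by exact_mod_cast hn
  have hπ := Real.pi_pos
  set s : Finset ℕ := Finset.range (n+1) with hs
  set v : ℕ → ℝ := fun j => Real.cos (j * π / n) with hv
  have hangle : ∀ j ∈ s, (j:ℝ) * π / n ∈ Set.Icc 0 π := by
    intro j hj
    rw [hs, Finset.mem_range] at hj
    have hj' : (j:ℝ) ≤ n := by exact_mod_cast Nat.lt_succ_iff.mp hj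
    constructor
    · positivity
    · rw [div_le_iff₀ hnpos]; nlinarith
  have hanti : ∀ i ∈ s, ∀ j ∈ s, i < j → v j < v i := by
    intro i hi j hj hij
    apply Real.strictAntiOn_cos (hangle i hi) (hangle j hj)
    have hij' : (i:ℝ) < j := by exact_mod_cast hij
    gcongr
  have hinj : Set.InjOn v s := by
    intro i hi j hj heq
    by_contra hne
    rcases Nat.lt_or_ge i j with h | h
    · exact (ne_of_gt (hanti i (Finset.mem_coe.mp hi) j (Finset.mem_coe.mp hj) h)) heq
    · have h' : j < i := by omega
      exact (ne_of_gt (hanti j (Finset.mem_coe.mp hj) i (Finset.mem_coe.mp hi) h')) heq.symm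
  set c : ℕ → ℝ := fun j => (Polynomial.derivative^[k] (Lagrange.basis s v j)).eval 1 with hc
  have hbasis : ∀ j, Lagrange.basis s v j =
      C ((∏ i ∈ s.erase j, (v j - v i))⁻¹) * ∏ i ∈ s.erase j, (X - C (v i)) := by
    intro j
    rw [Lagrange.basis]
    simp_rw [Lagrange.basisDivisor]
    rw [Finset.prod_mul_distrib, ← map_prod, Finset.prod_inv_distrib]
  have hcval : ∀ j, c j = (∏ i ∈ s.erase j, (v j - v i))⁻¹ *
      (Polynomial.derivative^[k] (∏ i ∈ s.erase j, (X - C (v i)))).eval 1 := by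
    intro j
    rw [hc]
    simp only []
    rw [hbasis j, Polynomial.iterate_derivative_C_mul, Polynomial.eval_mul, Polynomial.eval_C]
  have hD : ∀ j, 0 ≤ (Polynomial.derivative^[k] (∏ i ∈ s.erase j, (X - C (v i)))).eval 1 := by
    intro j
    rw [Finset.prod_eq_multiset_prod, show ((s.erase j).val.map fun i => X - C (v i)) =
      (((s.erase j).val.map v).map fun r => X - C r) by rw [Multiset.map_map]; rfl]
    refine aux_nonneg k _ fun r hr => ?_
    obtain ⟨i, hi, rfl⟩ := Multiset.mem_map.mp hr
    exact Real.cos_le_one _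
  have hsign : ∀ j ∈ s, 0 < (-1:ℝ)^j * ∏ i ∈ s.erase j, (v j - v i) := by
    intro j hj
    have hjn : j ≤ n := by rw [hs, Finset.mem_range] at hj; omega
    have hsplit : s.erase j = Finset.range j ∪ Finset.Ico (j+1) (n+1) := by
      ext i
      simp only [hs, Finset.mem_erase, Finset.mem_range, Finset.mem_Ico, Finset.mem_union]
      omega
    have hdisj : Disjoint (Finset.range j) (Finset.Ico (j+1) (n+1)) := by
      rw [Finset.disjoint_left]
      intro i hi hi'
      rw [Finset.mem_range] at hi
      rw [Finset.mem_Ico] at hi'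
      omega
    rw [hsplit, Finset.prod_union hdisj]
    have h1 : ∏ i ∈ Finset.range j, (v j - v i)
        = (-1:ℝ)^j * ∏ i ∈ Finset.range j, (v i - v j) := by
      calc ∏ i ∈ Finset.range j, (v j - v i)
          = ∏ i ∈ Finset.range j, ((-1) * (v i - v j)) :=
            Finset.prod_congr rfl (by intros; ring)
        _ = (-1:ℝ)^j * ∏ i ∈ Finset.range j, (v i - v j) := by
            rw [Finset.prod_mul_distrib, Finset.prod_const, Finset.card_range]
    have hpos1 : 0 < ∏ i ∈ Finset.range j, (v i - v j) := by
      refine Finset.prod_pos fun i hi => ?_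
      rw [Finset.mem_range] at hi
      have := hanti i (by rw [hs, Finset.mem_range]; omega) j hj hi
      linarith
    have hpos2 : 0 < ∏ i ∈ Finset.Ico (j+1) (n+1), (v j - v i) := by
      refine Finset.prod_pos fun i hi => ?_
      rw [Finset.mem_Ico] at hi
      have := hanti j hj i (by rw [hs, Finset.mem_range]; omega) (by omega)
      linarith
    have hsq : (-1:ℝ)^j * (-1)^j = 1 := by
      rw [← pow_add, show j + j = 2 * j by omega, pow_mul]
      norm_num
    calc (0:ℝ) < (∏ i ∈ Finset.range j, (v i - v j)) *
          ∏ i ∈ Finset.Ico (j+1) (n+1), (v j - v i) := mul_pos hpos1 hpos2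
      _ = (-1:ℝ)^j * (((-1:ℝ)^j * ∏ i ∈ Finset.range j, (v i - v j)) *
          ∏ i ∈ Finset.Ico (j+1) (n+1), (v j - v i)) := by
          rw [show ∀ a b : ℝ, (-1:ℝ)^j * (((-1:ℝ)^j * a) * b) = ((-1:ℝ)^j * (-1)^j) * (a * b)
            from fun a b => by ring, hsq, one_mul]
      _ = (-1:ℝ)^j * ((∏ i ∈ Finset.range j, (v j - v i)) *
          ∏ i ∈ Finset.Ico (j+1) (n+1), (v j - v i)) := by rw [← h1]
  have hcsign : ∀ j ∈ s, 0 ≤ (-1:ℝ)^j * c j := by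
    intro j hj
    rw [hcval j]
    have h := hsign j hj
    have hPinv : 0 ≤ (-1:ℝ)^j * (∏ i ∈ s.erase j, (v j - v i))⁻¹ := by
      have heq : (-1:ℝ)^j * (∏ i ∈ s.erase j, (v j - v i))⁻¹
          = ((-1:ℝ)^j * ∏ i ∈ s.erase j, (v j - v i))⁻¹ := by
        rw [mul_inv, ← inv_pow, inv_neg_one]
      rw [heq]
      exact le_of_lt (inv_pos.mpr h)
    calc (0:ℝ) ≤ ((-1:ℝ)^j * (∏ i ∈ s.erase j, (v j - v i))⁻¹) *
        (Polynomial.derivative^[k] (∏ i ∈ s.erase j, (X - C (v i)))).eval 1 :=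
          mul_nonneg hPinv (hD j)
      _ = (-1:ℝ)^j * ((∏ i ∈ s.erase j, (v j - v i))⁻¹ *
        (Polynomial.derivative^[k] (∏ i ∈ s.erase j, (X - C (v i)))).eval 1) := by ring
  have hTval : ∀ j, (Polynomial.Chebyshev.T ℝ n).eval (v j) = (-1:ℝ)^j := by
    intro j
    rw [hv]
    simp only []
    rw [Polynomial.Chebyshev.T_real_cos]
    have harg : ((n:ℤ):ℝ) * ((j:ℝ) * π / n) = 0 + (j:ℝ) * π := by
      push_cast
      field_simp
      ring
    rw [harg, Real.cos_add_nat_mul_pi, Real.cos_zero, mul_one]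
  have hdegp : p.degree < (s.card : ℕ) := by
    rw [hs, Finset.card_range]
    have h1 : p.degree ≤ ((n : ℕ) : WithBot ℕ) :=
      Polynomial.degree_le_natDegree.trans (by exact_mod_cast hdeg)
    exact h1.trans_lt (by exact_mod_cast Nat.lt_succ_self n)
  have hdegT : (Polynomial.Chebyshev.T ℝ n).degree < (s.card : ℕ) := by
    rw [hs, Finset.card_range]
    have h1 : (Polynomial.Chebyshev.T ℝ n).degree ≤ ((n : ℕ) : WithBot ℕ) :=
      Polynomial.degree_le_natDegree.trans (by exact_mod_cast aux_T_deg n)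
    exact h1.trans_lt (by exact_mod_cast Nat.lt_succ_self n)
  have hexp : ∀ q : Polynomial ℝ, q.degree < (s.card : ℕ) →
      (Polynomial.derivative^[k] q).eval 1 = ∑ j ∈ s, q.eval (v j) * c j := by
    intro q hq
    conv_lhs => rw [Lagrange.eq_interpolate hinj hq]
    rw [Lagrange.interpolate_apply, Polynomial.iterate_derivative_sum,
      Polynomial.eval_finset_sum]
    refine Finset.sum_congr rfl fun j hj => ?_
    rw [Polynomial.iterate_derivative_C_mul, Polynomial.eval_mul, Polynomial.eval_C]
  rw [hexp p hdegp, hexp _ hdegT]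
  refine Finset.sum_le_sum fun j hj => ?_
  rw [hTval j]
  have h1 : |c j| = (-1:ℝ)^j * c j := by
    rw [← abs_of_nonneg (hcsign j hj), abs_mul, abs_pow, abs_neg, abs_one, one_pow, one_mul]
  have h2 : |p.eval (v j)| ≤ 1 :=
    hbound _ ⟨Real.neg_one_le_cos _, Real.cos_le_one _⟩
  calc p.eval (v j) * c j ≤ |p.eval (v j) * c j| := le_abs_self _
    _ = |p.eval (v j)| * |c j| := abs_mul _ _
    _ ≤ 1 * |c j| := mul_le_mul_of_nonneg_right h2 (abs_nonneg _)
    _ = (-1:ℝ)^j * c j := by rw [one_mul, h1]
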